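/- For m ≥ 4, the Nimber of the Toggle position H_m satisfies G(H_m) = mex{ x_3, x_4, …, x_s, y_3, y_4, …, y_s }, where x_i = G(H_i) XOR G(H_{m+1−i}), y_i = G(D_i) XOR G(D_{m+1−i}) for i ∈ {3,4,…,s}, and s = ⌊(m+1)/2⌋. -/

import Mathlib

namespace Toggle

variable {V : Type*} [Fintype V] [DecidableEq V]

/-- The closed neighborhood `N[v]` of a vertex as a `Finset`. -/
def closedNbhd (G : SimpleGraph V) [DecidableRel G.Adj] (v : V) : Finset V :=
  insert v (G.neighborFinset v)

/-- The result of a Toggle move at `v`: flip the weight of every vertex in `N[v]`. -/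
def move (G : SimpleGraph V) [DecidableRel G.Adj] (ω : V → Bool) (v : V) : V → Bool :=
  fun u => if u ∈ closedNbhd G v then !(ω u) else ω u

/-- Total weight of a position. -/
def weight (ω : V → Bool) : ℕ := (Finset.univ.filter (fun u => ω u = true)).card

/-- Weight of a position over the closed neighborhood of `v`. -/
def nbhdWeight (G : SimpleGraph V) [DecidableRel G.Adj] (ω : V → Bool) (v : V) : ℕ :=
  ((closedNbhd G v).filter (fun u => ω u = true)).card

/-- A Toggle move at `v` is legal iff `ω v = 1` and the move strictly decreases the
weight over `N[v]`. -/
def IsLegal (G : SimpleGraph V) [DecidableRel G.Adj] (ω : V → Bool) (v : V) : Prop :=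
  ω v = true ∧ nbhdWeight G (move G ω v) v < nbhdWeight G ω v

instance (G : SimpleGraph V) [DecidableRel G.Adj] (ω : V → Bool) (v : V) :
    Decidable (IsLegal G ω v) :=
  inferInstanceAs (Decidable (ω v = true ∧ nbhdWeight G (move G ω v) v < nbhdWeight G ω v))

theorem weight_move_lt (G : SimpleGraph V) [DecidableRel G.Adj] {ω : V → Bool} {v : V}
    (h : IsLegal G ω v) : weight (move G ω v) < weight ω := by
  have key : ∀ ψ : V → Bool,
      weight ψ = ((closedNbhd G v).filter (fun u => ψ u = true)).card
        + ((Finset.univ \ closedNbhd G v).filter (fun u => ψ u = true)).card := by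
    intro ψ
    rw [weight, ← Finset.card_union_of_disjoint
      (Finset.disjoint_filter_filter Finset.disjoint_sdiff)]
    congr 1
    ext u
    simp only [Finset.mem_filter, Finset.mem_union, Finset.mem_sdiff, Finset.mem_univ,
      true_and]
    tauto
  have hout : ((Finset.univ \ closedNbhd G v).filter (fun u => move G ω v u = true))
      = ((Finset.univ \ closedNbhd G v).filter (fun u => ω u = true)) := by
    apply Finset.filter_congr
    intro u hu
    rw [Finset.mem_sdiff] at hu
    simp [move, hu.2]
  have h2 := h.2
  rw [key (move G ω v), key ω, hout]
  unfold nbhdWeight at h2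
  omega

/-- Minimal excludant of a finite set of naturals. -/
noncomputable def mex (s : Finset ℕ) : ℕ := sInf {n : ℕ | n ∉ s}

/-- The Nimber (Grundy value) of a Toggle position. -/
noncomputable def grundy (G : SimpleGraph V) [DecidableRel G.Adj] (ω : V → Bool) : ℕ :=
  mex ((Finset.univ.filter (fun v => IsLegal G ω v)).attach.image
    (fun v => grundy G (move G ω v.1)))
termination_by weight ω
decreasing_by
  have hv := v.2
  rw [Finset.mem_filter] at hv
  exact weight_move_lt G hv.2

/-- One legal Toggle move transforms `ω` into `ω'`. -/
def Step (G : SimpleGraph V) [DecidableRel G.Adj] (ω ω' : V → Bool) : Prop :=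
  ∃ v, IsLegal G ω v ∧ ω' = move G ω v

/-- `ω'` is reachable from `ω` by a (possibly empty) sequence of legal moves. -/
def Reach (G : SimpleGraph V) [DecidableRel G.Adj] (ω ω' : V → Bool) : Prop :=
  Relation.ReflTransGen (Step G) ω ω'

/-- `v` is terminally unplayable at `ω`: unplayable at `ω` and at every position
reachable from `ω`. -/
def TerminallyUnplayable (G : SimpleGraph V) [DecidableRel G.Adj] (ω : V → Bool) (v : V) :
    Prop :=
  ∀ ω', Reach G ω ω' → ¬ IsLegal G ω' v

/-- `v` is penultimately unplayable for the initial position `ω₀`: at every position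
reachable from `ω₀`, after any legal move at a vertex `u ∈ N[v]`, the vertex `v` is
terminally unplayable. -/
def PenultimatelyUnplayableAt (G : SimpleGraph V) [DecidableRel G.Adj] (ω₀ : V → Bool)
    (v : V) : Prop :=
  ∀ ω', Reach G ω₀ ω' → ∀ u ∈ closedNbhd G v, IsLegal G ω' u →
    TerminallyUnplayable G (move G ω' u) v

/-- The position `ω₀` is penultimately unplayable if every vertex is. -/
def PenultimatelyUnplayable (G : SimpleGraph V) [DecidableRel G.Adj] (ω₀ : V → Bool) :
    Prop :=
  ∀ v, PenultimatelyUnplayableAt G ω₀ v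

/-- The path graph on `Fin n`, vertices `0, 1, …, n-1` in order. -/
def pathGraph (n : ℕ) : SimpleGraph (Fin n) :=
  SimpleGraph.fromRel (fun a b => (a : ℕ) + 1 = (b : ℕ))

instance (n : ℕ) : DecidableRel (pathGraph n).Adj := fun a b =>
  decidable_of_iff _ (SimpleGraph.fromRel_adj _ a b).symm

/-- The 2×m grid graph `L_{2,m}` (0-indexed rows and columns). -/
def gridGraph (m : ℕ) : SimpleGraph (Fin 2 × Fin m) :=
  SimpleGraph.fromRel (fun a b =>
    (a.1 = b.1 ∧ (a.2 : ℕ) + 1 = (b.2 : ℕ)) ∨ (a.2 = b.2 ∧ (a.1 : ℕ) + 1 = (b.1 : ℕ)))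

instance (m : ℕ) : DecidableRel (gridGraph m).Adj := fun a b =>
  decidable_of_iff _ (SimpleGraph.fromRel_adj _ a b).symm

/-- The generalized Petersen graph `P(m,k)`; the vertex `(0, i)` is the outer vertex
`u_i` and `(1, i)` is the inner vertex `w_i` (0-indexed). -/
def petersen (m k : ℕ) : SimpleGraph (Fin 2 × Fin m) :=
  SimpleGraph.fromRel (fun a b =>
    (a.1 = 0 ∧ b.1 = 0 ∧ ((a.2 : ℕ) + 1) % m = (b.2 : ℕ)) ∨
    (a.1 = 0 ∧ b.1 = 1 ∧ a.2 = b.2) ∨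
    (a.1 = 1 ∧ b.1 = 1 ∧ ((a.2 : ℕ) + k) % m = (b.2 : ℕ)))

instance (m k : ℕ) : DecidableRel (petersen m k).Adj := fun a b =>
  decidable_of_iff _ (SimpleGraph.fromRel_adj _ a b).symm

/-- The position on `P(m,k)` where every outer vertex has weight 1 and every inner
vertex has weight 0. -/
def P01 (m : ℕ) : Fin 2 × Fin m → Bool := fun p => decide (p.1 = 0)

/-- The position on `P(m,k)` where every inner vertex has weight 1 and every outer
vertex has weight 0. -/
def P10 (m : ℕ) : Fin 2 × Fin m → Bool := fun p => decide (p.1 = 1)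

/-- The position where every vertex has weight 1. -/
def P11 (m : ℕ) : Fin 2 × Fin m → Bool := fun _ => true

/-- The Toggle position `H_m` on `L_{2,m}` (columns 0-indexed): for `m ≠ 3`, weight 0
exactly at `(0,0), (0,m-1), (1,0), (1,1), (1,m-2), (1,m-1)`; for `m = 3`, weight 0
exactly at `(0,0), (0,2), (1,0), (1,2)`. -/
def Hpos (m : ℕ) : Fin 2 × Fin m → Bool := fun p =>
  if m = 3 then !(decide ((p.2 : ℕ) = 0 ∨ (p.2 : ℕ) = 2))
  else !(decide ((p.1 = 0 ∧ ((p.2 : ℕ) = 0 ∨ (p.2 : ℕ) = m - 1)) ∨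
                 (p.1 = 1 ∧ ((p.2 : ℕ) ≤ 1 ∨ m - 2 ≤ (p.2 : ℕ)))))

/-- The Toggle position `D_m` on `L_{2,m}` (columns 0-indexed): weight 0 exactly at
`(0,0), (0,m-2), (0,m-1), (1,0), (1,1), (1,m-1)`. -/
def Dpos (m : ℕ) : Fin 2 × Fin m → Bool := fun p =>
  !(decide ((p.1 = 0 ∧ ((p.2 : ℕ) = 0 ∨ m - 2 ≤ (p.2 : ℕ))) ∨
            (p.1 = 1 ∧ ((p.2 : ℕ) ≤ 1 ∨ (p.2 : ℕ) = m - 1))))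

/-- The Nimber of the position `H_m`. -/
noncomputable def GH (m : ℕ) : ℕ := grundy (gridGraph m) (Hpos m)

/-- The Nimber of the position `D_m`. -/
noncomputable def GD (m : ℕ) : ℕ := grundy (gridGraph m) (Dpos m)

/-- The cycle graph `C_m` on `Fin m`. -/
def cycleGraph (m : ℕ) : SimpleGraph (Fin m) :=
  SimpleGraph.fromRel (fun a b => ((a : ℕ) + 1) % m = (b : ℕ))

open scoped Classical in
/-- The Nimber of a position of Jacob's Ladder on `C_m`: a position is the `Finset` of
not-yet-removed vertices, and a move at a remaining vertex `v` removes all remaining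
vertices at distance at most 2 from `v` in `C_m`. -/
noncomputable def jlGrundy (m : ℕ) (S : Finset (Fin m)) : ℕ :=
  mex (S.attach.image (fun v =>
    jlGrundy m (S.filter (fun u => 2 < (cycleGraph m).dist v.1 u))))
termination_by S.card
decreasing_by
  apply Finset.card_lt_card
  rw [Finset.ssubset_iff_of_subset (Finset.filter_subset _ _)]
  exact ⟨v.1, v.2, by simp [SimpleGraph.dist_self]⟩

end Toggle

namespace Toggle

lemma mex_notMem (s : Finset ℕ) : mex s ∉ s := by
  have : {n : ℕ | n ∉ s}.Nonempty := by
    obtain ⟨n, hn⟩ := (s : Set ℕ).toFinite.infinite_compl.nonempty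
    exact ⟨n, hn⟩
  exact Nat.sInf_mem this

lemma mem_of_lt_mex {s : Finset ℕ} {k : ℕ} (h : k < mex s) : k ∈ s := by
  by_contra hk
  exact absurd (Nat.sInf_le (s := {n : ℕ | n ∉ s}) hk) (by simpa [mex] using h.not_ge)

lemma mex_eq_of {s : Finset ℕ} {x : ℕ} (hx : x ∉ s) (h : ∀ y < x, y ∈ s) : mex s = x := by
  refine le_antisymm (Nat.sInf_le hx) ?_
  by_contra hlt
  exact absurd (h _ (lt_of_not_ge hlt)) (mex_notMem s)

lemma mex_empty : mex ∅ = 0 := by simp [mex]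

lemma mex_xor (A B : Finset ℕ) :
    mex ((A.image (· ^^^ mex B)) ∪ (B.image (mex A ^^^ ·))) = mex A ^^^ mex B := by
  apply mex_eq_of
  · intro hmem
    rcases Finset.mem_union.1 hmem with h | h <;> obtain ⟨x, hx, hx2⟩ := Finset.mem_image.1 h
    · have : x = mex A := by
        have := congrArg (· ^^^ mex B) hx2
        simpa using this
      exact mex_notMem A (this ▸ hx)
    · have : x = mex B := by
        have := congrArg (mex A ^^^ ·) hx2
        simpa [← Nat.xor_assoc] using this
      exact mex_notMem B (this ▸ hx)
  · intro y hy
    rcases Nat.lt_xor_cases hy with h | h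
    · refine Finset.mem_union_left _ (Finset.mem_image.2 ⟨y ^^^ mex B, mem_of_lt_mex h, ?_⟩)
      simp [Nat.xor_assoc]
    · refine Finset.mem_union_right _ (Finset.mem_image.2 ⟨y ^^^ mex A, mem_of_lt_mex h, ?_⟩)
      rw [Nat.xor_comm y (mex A), ← Nat.xor_assoc, Nat.xor_self, Nat.zero_xor]

end Toggle

namespace Toggle

lemma grundy_eq {V : Type*} [Fintype V] [DecidableEq V] (G : SimpleGraph V)
    [DecidableRel G.Adj] (ω : V → Bool) :
    grundy G ω = mex ((Finset.univ.filter (fun v => IsLegal G ω v)).image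
      (fun v => grundy G (move G ω v))) := by
  rw [grundy]
  congr 1
  ext n
  simp [Finset.mem_image]

/-- Adjacency characterization in the grid graph. -/
lemma grid_adj {m : ℕ} {v u : Fin 2 × Fin m} :
    (gridGraph m).Adj v u ↔
      ((v.1 : ℕ) = u.1 ∧ ((v.2 : ℕ) + 1 = u.2 ∨ (u.2 : ℕ) + 1 = v.2)) ∨
      ((v.2 : ℕ) = u.2 ∧ (v.1 : ℕ) ≠ u.1) := by
  rw [gridGraph, SimpleGraph.fromRel_adj]
  obtain ⟨r, c⟩ := v; obtain ⟨r', c'⟩ := u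
  have h2 : (r : ℕ) < 2 := r.isLt
  have h2' : (r' : ℕ) < 2 := r'.isLt
  simp only [Prod.mk.injEq, Fin.ext_iff, ne_eq, not_and]
  omega

lemma mem_closedNbhd_grid {m : ℕ} {v u : Fin 2 × Fin m} :
    u ∈ closedNbhd (gridGraph m) v ↔
      ((u.2 : ℕ) = v.2 ∨ ((u.1 : ℕ) = v.1 ∧ ((u.2 : ℕ) + 1 = v.2 ∨ (v.2 : ℕ) + 1 = u.2))) := by
  rw [closedNbhd, Finset.mem_insert, SimpleGraph.mem_neighborFinset, grid_adj]
  obtain ⟨r, c⟩ := v; obtain ⟨r', c'⟩ := u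
  have h2 : (r : ℕ) < 2 := r.isLt
  have h2' : (r' : ℕ) < 2 := r'.isLt
  simp only [Prod.mk.injEq, Fin.ext_iff, ne_eq]
  omega

end Toggle

namespace Toggle

lemma filter_card_eq_sum {V : Type*} [DecidableEq V] (s : Finset V) (ψ : V → Bool) :
    (s.filter (fun u => ψ u = true)).card = ∑ u ∈ s, (ψ u).toNat := by
  rw [Finset.card_filter]
  exact Finset.sum_congr rfl (fun u _ => by cases h : ψ u <;> simp [h])

lemma closedNbhd_interior {m : ℕ} (r : Fin 2) (c : ℕ) (h1 : 1 ≤ c) (h2 : c + 1 < m) :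
    closedNbhd (gridGraph m) (r, ⟨c, by omega⟩) =
      {(r, ⟨c-1, by omega⟩), (r, ⟨c, by omega⟩), (r, ⟨c+1, by omega⟩), (r+1, ⟨c, by omega⟩)} := by
  ext u
  obtain ⟨u1, u2⟩ := u
  rw [mem_closedNbhd_grid]
  simp only [Finset.mem_insert, Finset.mem_singleton, Prod.mk.injEq, Fin.ext_iff, Fin.val_add]
  have := u1.isLt; have := u2.isLt; have := r.isLt
  omega

lemma nbhdWeight_interior {m : ℕ} (ω : Fin 2 × Fin m → Bool) (r : Fin 2) (c : ℕ)
    (h1 : 1 ≤ c) (h2 : c + 1 < m) :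
    nbhdWeight (gridGraph m) ω (r, ⟨c, by omega⟩) =
      (ω (r, ⟨c-1, by omega⟩)).toNat + (ω (r, ⟨c, by omega⟩)).toNat
        + (ω (r, ⟨c+1, by omega⟩)).toNat + (ω (r+1, ⟨c, by omega⟩)).toNat := by
  have hr : r ≠ r + 1 := by
    have := r.isLt
    simp only [ne_eq, Fin.ext_iff, Fin.val_add]
    omega
  rw [nbhdWeight, filter_card_eq_sum, closedNbhd_interior r c h1 h2]
  rw [Finset.sum_insert (by simp [Prod.ext_iff, Fin.ext_iff] <;> omega),
      Finset.sum_insert (by simp [Prod.ext_iff, Fin.ext_iff, hr] <;> omega),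
      Finset.sum_insert (by simp [Prod.ext_iff, Fin.ext_iff, hr] <;> omega),
      Finset.sum_singleton]
  ring

lemma nbhdWeight_move {V : Type*} [Fintype V] [DecidableEq V] (G : SimpleGraph V)
    [DecidableRel G.Adj] (ω : V → Bool) (v : V) :
    nbhdWeight G (move G ω v) v = (closedNbhd G v).card - nbhdWeight G ω v := by
  unfold nbhdWeight
  have : (closedNbhd G v).filter (fun u => move G ω v u = true)
      = (closedNbhd G v).filter (fun u => ¬ (ω u = true)) := by
    apply Finset.filter_congr
    intro u hu
    simp [move, hu]
  rw [this, Finset.filter_not, Finset.card_sdiff_of_subset (Finset.filter_subset _ _)]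

lemma isLegal_iff_card {V : Type*} [Fintype V] [DecidableEq V] (G : SimpleGraph V)
    [DecidableRel G.Adj] (ω : V → Bool) (v : V) :
    IsLegal G ω v ↔ ω v = true ∧ (closedNbhd G v).card < 2 * nbhdWeight G ω v := by
  have hle : nbhdWeight G ω v ≤ (closedNbhd G v).card := Finset.card_filter_le _ _
  rw [IsLegal, nbhdWeight_move]
  exact and_congr Iff.rfl (by omega)

lemma card_closedNbhd_interior {m : ℕ} (r : Fin 2) (c : ℕ) (h1 : 1 ≤ c) (h2 : c + 1 < m) :
    (closedNbhd (gridGraph m) (r, ⟨c, by omega⟩)).card = 4 := by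
  have hr : r ≠ r + 1 := by
    have := r.isLt
    simp only [ne_eq, Fin.ext_iff, Fin.val_add]
    omega
  rw [closedNbhd_interior r c h1 h2]
  rw [Finset.card_insert_of_notMem (by simp [Prod.ext_iff, Fin.ext_iff] <;> omega),
      Finset.card_insert_of_notMem (by simp [Prod.ext_iff, Fin.ext_iff, hr] <;> omega),
      Finset.card_insert_of_notMem (by simp [Prod.ext_iff, Fin.ext_iff, hr] <;> omega),
      Finset.card_singleton]

lemma isLegal_interior {m : ℕ} (ω : Fin 2 × Fin m → Bool) (r : Fin 2) (c : ℕ)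
    (h1 : 1 ≤ c) (h2 : c + 1 < m) :
    IsLegal (gridGraph m) ω (r, ⟨c, by omega⟩) ↔
      ω (r, ⟨c, by omega⟩) = true ∧
      3 ≤ (ω (r, ⟨c-1, by omega⟩)).toNat + (ω (r, ⟨c, by omega⟩)).toNat
        + (ω (r, ⟨c+1, by omega⟩)).toNat + (ω (r+1, ⟨c, by omega⟩)).toNat := by
  rw [isLegal_iff_card, card_closedNbhd_interior r c h1 h2, nbhdWeight_interior ω r c h1 h2]
  have tle : ∀ b : Bool, b.toNat ≤ 1 := fun b => by cases b <;> simp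
  have t1 := tle (ω (r, ⟨c-1, by omega⟩))
  have t2 := tle (ω (r, ⟨c, by omega⟩))
  have t3 := tle (ω (r, ⟨c+1, by omega⟩))
  have t4 := tle (ω (r+1, ⟨c, by omega⟩))
  exact and_congr Iff.rfl (by omega)

lemma not_isLegal_of_false {V : Type*} [Fintype V] [DecidableEq V] (G : SimpleGraph V)
    [DecidableRel G.Adj] {ω : V → Bool} {v : V} (h : ω v = false) : ¬ IsLegal G ω v := by
  intro hl
  rw [hl.1] at h
  simp at h

end Toggle

namespace Toggle

/-- Parametric block position: `s` says which row starts at column 1 (the other starts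
at 2), `t` says which row ends at column `k-2` (the other ends at `k-3`).
`(0,0) = H`, `(1,1) = σH`, `(0,1) = D`, `(1,0) = Dᴿ`. Size-3 blocks with `s = t`
are the special shape `010/010`. -/
def bpos (s t : Fin 2) (k : ℕ) : Fin 2 × Fin k → Bool := fun p =>
  if k = 3 ∧ s = t then decide ((p.2 : ℕ) = 1)
  else decide ((if p.1 = s then 1 else 2) ≤ (p.2 : ℕ) ∧
               (p.2 : ℕ) ≤ (if p.1 = t then k - 2 else k - 3))

/-- Join of two positions along a shared cut column (column `a-1` of the first is
column `0` of the second). -/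
def join (a b k : ℕ) (ω₁ : Fin 2 × Fin a → Bool) (ω₂ : Fin 2 × Fin b → Bool) :
    Fin 2 × Fin k → Bool := fun p =>
  if h : (p.2 : ℕ) < a then ω₁ (p.1, ⟨p.2, h⟩)
  else if h2 : (p.2 : ℕ) - (a - 1) < b then ω₂ (p.1, ⟨(p.2 : ℕ) - (a - 1), h2⟩)
  else false

lemma isLegal_interior' {m : ℕ} (ω : Fin 2 × Fin m → Bool) (r : Fin 2) (c : ℕ)
    (h1 : 1 ≤ c) (h2 : c + 1 < m) :
    IsLegal (gridGraph m) ω (r, ⟨c, by omega⟩) ↔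
      ω (r, ⟨c, by omega⟩) = true ∧
      ((ω (r, ⟨c-1, by omega⟩) = true ∧ ω (r, ⟨c+1, by omega⟩) = true) ∨
       (ω (r, ⟨c-1, by omega⟩) = true ∧ ω (r+1, ⟨c, by omega⟩) = true) ∨
       (ω (r, ⟨c+1, by omega⟩) = true ∧ ω (r+1, ⟨c, by omega⟩) = true)) := by
  rw [isLegal_interior ω r c h1 h2]
  cases hb1 : ω (r, ⟨c-1, by omega⟩) <;> cases hb2 : ω (r, ⟨c, by omega⟩) <;>
    cases hb3 : ω (r, ⟨c+1, by omega⟩) <;> cases hb4 : ω (r+1, ⟨c, by omega⟩) <;>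
    simp [hb1, hb2, hb3, hb4]

lemma bpos_boundary {s t : Fin 2} {k : ℕ} (hk : 3 ≤ k) (r : Fin 2) (c : Fin k)
    (hc : (c : ℕ) = 0 ∨ (c : ℕ) = k - 1) : bpos s t k (r, c) = false := by
  rw [bpos]
  split
  · next h => simp only [decide_eq_false_iff_not]; omega
  · simp only [decide_eq_false_iff_not, not_and, not_le]
    intro h
    split at h <;> split <;> omega

lemma isLegal_bpos {s t : Fin 2} {k : ℕ} (hk : 3 ≤ k) (r : Fin 2) (c : Fin k) :
    IsLegal (gridGraph k) (bpos s t k) (r, c) ↔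
      (2 ≤ (c : ℕ) ∧ (c : ℕ) ≤ k - 3 ∧ ¬(k = 5 ∧ s = t ∧ r ≠ s)) := by
  by_cases hk3 : k = 3
  · subst hk3
    constructor
    · intro h
      exfalso
      revert h
      fin_cases s <;> fin_cases t <;> fin_cases r <;> fin_cases c <;> decide
    · intro h
      have := c.isLt
      omega
  · by_cases hc0 : (c : ℕ) = 0 ∨ (c : ℕ) = k - 1
    · constructor
      · intro h
        exact absurd h (not_isLegal_of_false _ (bpos_boundary hk r c hc0))
      · intro h
        have := c.isLt
        omega
    · have hc1 : 1 ≤ (c : ℕ) := by omega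
      have hc2 : (c : ℕ) + 1 < k := by have := c.isLt; omega
      have key := isLegal_interior' (bpos s t k) r (c : ℕ) hc1 hc2
      simp only [Fin.eta] at key
      rw [key]
      simp only [bpos, if_neg (fun h : k = 3 ∧ s = t => hk3 h.1), decide_eq_true_eq, ne_eq]
      have h2r := r.isLt
      have h2s := s.isLt
      have h2t := t.isLt
      have hc3 := c.isLt
      split_ifs <;> simp only [Fin.ext_iff, Fin.val_add, Fin.val_one] at * <;> omega

end Toggle

namespace Toggle
set_option maxHeartbeats 2000000 in

lemma move_bpos {s t : Fin 2} {k : ℕ} (j : ℕ) (hj1 : 2 ≤ j) (hj2 : j ≤ k - 3)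
    (hk : 5 ≤ k) (r : Fin 2) :
    move (gridGraph k) (bpos s t k) (r, ⟨j, by omega⟩) =
      join (j+1) (k-j) k (bpos s (r+1) (j+1)) (bpos (r+1) t (k-j)) := by
  funext p
  obtain ⟨u, c⟩ := p
  have hu := u.isLt; have hr := r.isLt; have hs := s.isLt; have ht := t.isLt
  have hc := c.isLt
  simp only [move, mem_closedNbhd_grid, join, bpos]
  rw [if_neg (fun h : k = 3 ∧ s = t => by omega)]
  split_ifs <;>
    simp only [Fin.ext_iff, Fin.val_add, Fin.val_one, Fin.val_mk, ← decide_not,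
      decide_eq_decide, decide_eq_false_iff_not, decide_eq_true_eq] at * <;>
    omega

end Toggle

namespace Toggle

section Join

variable {a b k : ℕ} {ω₁ : Fin 2 × Fin a → Bool} {ω₂ : Fin 2 × Fin b → Bool}

lemma join_apply_left (r : Fin 2) (c : Fin k) (hc : (c : ℕ) < a) :
    join a b k ω₁ ω₂ (r, c) = ω₁ (r, ⟨c, hc⟩) := dif_pos hc

lemma join_apply_right (hk : a + b - 1 = k) (ha : 3 ≤ a) (hb : 3 ≤ b)
    (h1 : ∀ r, ω₁ (r, ⟨a-1, by omega⟩) = false)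
    (h2 : ∀ r, ω₂ (r, ⟨0, by omega⟩) = false)
    (r : Fin 2) (c : Fin k) (hc : a - 1 ≤ (c : ℕ)) :
    join a b k ω₁ ω₂ (r, c) = ω₂ (r, ⟨(c : ℕ) - (a-1), by have := c.isLt; omega⟩) := by
  have hck := c.isLt
  rw [join]
  by_cases h : (c : ℕ) < a
  · rw [dif_pos h]
    have hc1 : (c : ℕ) = a - 1 := by omega
    rw [show (⟨(c:ℕ), h⟩ : Fin a) = ⟨a-1, by omega⟩ from Fin.ext (by simpa using hc1),
        show (⟨(c:ℕ) - (a-1), by omega⟩ : Fin b) = ⟨0, by omega⟩ from Fin.ext (by simp; omega),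
        h1, h2]
  · rw [dif_neg h, dif_pos (show (c:ℕ) - (a-1) < b by omega)]

lemma isLegal_interior_congr {m m' : ℕ} (ω : Fin 2 × Fin m → Bool)
    (ω' : Fin 2 × Fin m' → Bool) (r : Fin 2) (c c' : ℕ)
    (h1 : 1 ≤ c) (h2 : c + 1 < m) (h1' : 1 ≤ c') (h2' : c' + 1 < m')
    (e0 : ω (r, ⟨c, by omega⟩) = ω' (r, ⟨c', by omega⟩))
    (em : ω (r, ⟨c-1, by omega⟩) = ω' (r, ⟨c'-1, by omega⟩))
    (ep : ω (r, ⟨c+1, by omega⟩) = ω' (r, ⟨c'+1, by omega⟩))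
    (eo : ω (r+1, ⟨c, by omega⟩) = ω' (r+1, ⟨c', by omega⟩)) :
    (IsLegal (gridGraph m) ω (r, ⟨c, by omega⟩) ↔
      IsLegal (gridGraph m') ω' (r, ⟨c', by omega⟩)) := by
  rw [isLegal_interior' ω r c h1 h2, isLegal_interior' ω' r c' h1' h2', e0, em, ep, eo]

lemma isLegal_join_left (hk : a + b - 1 = k) (ha : 3 ≤ a) (hb : 3 ≤ b)
    (hb1 : ∀ (r : Fin 2) (d : Fin a), (d : ℕ) = 0 ∨ (d : ℕ) = a - 1 → ω₁ (r, d) = false)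
    (r : Fin 2) (c : Fin k) (hc : (c : ℕ) ≤ a - 2) :
    IsLegal (gridGraph k) (join a b k ω₁ ω₂) (r, c) ↔
      IsLegal (gridGraph a) ω₁ (r, ⟨c, by omega⟩) := by
  by_cases h0 : (c : ℕ) = 0
  · refine iff_of_false (not_isLegal_of_false _ ?_) (not_isLegal_of_false _ ?_)
    · rw [join_apply_left r c (by omega), hb1 _ _ (Or.inl (by simpa using h0))]
    · rw [hb1 _ _ (Or.inl (by simpa using h0))]
  · have h1 : 1 ≤ (c : ℕ) := by omega
    have h2 : (c : ℕ) + 1 < k := by omega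
    have h2' : (c : ℕ) + 1 < a := by omega
    have key := isLegal_interior_congr (join a b k ω₁ ω₂) ω₁ r (c : ℕ) (c : ℕ) h1 h2 h1 h2'
      (join_apply_left _ _ (by simp only [Fin.val_mk]; omega))
      (join_apply_left _ _ (by simp only [Fin.val_mk]; omega))
      (join_apply_left _ _ (by simp only [Fin.val_mk]; omega))
      (join_apply_left _ _ (by simp only [Fin.val_mk]; omega))
    simpa only [Fin.eta] using key

lemma isLegal_join_right (hk : a + b - 1 = k) (ha : 3 ≤ a) (hb : 3 ≤ b)
    (hb1 : ∀ (r : Fin 2) (d : Fin a), (d : ℕ) = 0 ∨ (d : ℕ) = a - 1 → ω₁ (r, d) = false)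
    (hb2 : ∀ (r : Fin 2) (d : Fin b), (d : ℕ) = 0 ∨ (d : ℕ) = b - 1 → ω₂ (r, d) = false)
    (r : Fin 2) (c : Fin k) (hc : a ≤ (c : ℕ)) :
    IsLegal (gridGraph k) (join a b k ω₁ ω₂) (r, c) ↔
      IsLegal (gridGraph b) ω₂ (r, ⟨(c : ℕ) - (a-1), by have := c.isLt; omega⟩) := by
  have hck := c.isLt
  have h1' : ∀ r, ω₁ (r, ⟨a-1, by omega⟩) = false := fun r => hb1 r _ (Or.inr (by simp))
  have h2' : ∀ r, ω₂ (r, ⟨0, by omega⟩) = false := fun r => hb2 r _ (Or.inl (by simp))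
  by_cases h0 : (c : ℕ) = k - 1
  · refine iff_of_false (not_isLegal_of_false _ ?_) (not_isLegal_of_false _ ?_)
    · rw [join_apply_right hk ha hb h1' h2' r c (by omega), hb2 _ _ (Or.inr (by simp; omega))]
    · rw [hb2 _ _ (Or.inr (by simp; omega))]
  · have h1 : 1 ≤ (c : ℕ) := by omega
    have h2 : (c : ℕ) + 1 < k := by omega
    have hcb : 1 ≤ (c : ℕ) - (a-1) := by omega
    have hcb2 : (c : ℕ) - (a-1) + 1 < b := by omega
    have key := isLegal_interior_congr (join a b k ω₁ ω₂) ω₂ r (c : ℕ) ((c:ℕ) - (a-1))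
      h1 h2 hcb hcb2
      (join_apply_right hk ha hb h1' h2' _ _ (by simp only [Fin.val_mk]; omega))
      (by rw [join_apply_right hk ha hb h1' h2' _ _ (by simp only [Fin.val_mk]; omega)]
          exact congrArg _ (congrArg _ (Fin.ext (by simp only [Fin.val_mk]; omega))))
      (by rw [join_apply_right hk ha hb h1' h2' _ _ (by simp only [Fin.val_mk]; omega)]
          exact congrArg _ (congrArg _ (Fin.ext (by simp only [Fin.val_mk]; omega))))
      (join_apply_right hk ha hb h1' h2' _ _ (by simp only [Fin.val_mk]; omega))
    simpa only [Fin.eta] using key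

lemma move_join_left (hk : a + b - 1 = k) (ha : 3 ≤ a) (hb : 3 ≤ b)
    (r : Fin 2) (c : Fin k) (hc2 : 2 ≤ (c : ℕ)) (hc : (c : ℕ) ≤ a - 3) :
    move (gridGraph k) (join a b k ω₁ ω₂) (r, c)
      = join a b k (move (gridGraph a) ω₁ (r, ⟨c, by omega⟩)) ω₂ := by
  funext p
  obtain ⟨u, d⟩ := p
  have hd := d.isLt
  simp only [move, join]
  by_cases hda : (d : ℕ) < a
  · rw [dif_pos hda, dif_pos hda]
    have hmm : ((u, d) ∈ closedNbhd (gridGraph k) (r, c)) ↔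
        ((u, ⟨d, hda⟩) ∈ closedNbhd (gridGraph a) (r, (⟨c, by omega⟩ : Fin a))) := by
      rw [mem_closedNbhd_grid, mem_closedNbhd_grid]
    rw [if_congr hmm rfl rfl]
  · have hnm : ¬((u, d) ∈ closedNbhd (gridGraph k) (r, c)) := by
      rw [mem_closedNbhd_grid]
      simp only [Fin.val_mk]
      omega
    rw [if_neg hnm, dif_neg hda, dif_neg hda]

lemma move_join_right (hk : a + b - 1 = k) (ha : 3 ≤ a) (hb : 3 ≤ b)
    (r : Fin 2) (c : Fin k) (hc2 : a + 1 ≤ (c : ℕ)) (hc : (c : ℕ) ≤ k - 3) :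
    move (gridGraph k) (join a b k ω₁ ω₂) (r, c)
      = join a b k ω₁
          (move (gridGraph b) ω₂ (r, ⟨(c : ℕ) - (a-1), by have := c.isLt; omega⟩)) := by
  have hck := c.isLt
  funext p
  obtain ⟨u, d⟩ := p
  have hd := d.isLt
  simp only [move, join]
  by_cases hda : (d : ℕ) < a
  · have hnm : ¬((u, d) ∈ closedNbhd (gridGraph k) (r, c)) := by
      rw [mem_closedNbhd_grid]
      simp only [Fin.val_mk]
      omega
    rw [if_neg hnm, dif_pos hda, dif_pos hda]
  · have hmm : ((u, d) ∈ closedNbhd (gridGraph k) (r, c)) ↔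
        ((u, (⟨(d:ℕ) - (a-1), by omega⟩ : Fin b)) ∈ closedNbhd (gridGraph b)
          (r, (⟨(c:ℕ) - (a-1), by omega⟩ : Fin b))) := by
      rw [mem_closedNbhd_grid, mem_closedNbhd_grid]
      simp only [Fin.val_mk]
      omega
    simp only [dif_neg hda, dif_pos (show (d:ℕ) - (a-1) < b by omega)]
    rw [if_congr hmm rfl rfl]

end Join
end Toggle

namespace Toggle

/-- Positions that are joins of blocks. -/
inductive Good : (k : ℕ) → (Fin 2 × Fin k → Bool) → Prop
  | base (s t : Fin 2) (k : ℕ) (hk : 3 ≤ k) : Good k (bpos s t k)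
  | join (a b k : ℕ) (ha : 3 ≤ a) (hb : 3 ≤ b) (hk : a + b - 1 = k)
      (ω₁ : Fin 2 × Fin a → Bool) (ω₂ : Fin 2 × Fin b → Bool)
      (h₁ : Good a ω₁) (h₂ : Good b ω₂) : Good k (join a b k ω₁ ω₂)

lemma good_boundary {k : ℕ} {ω : Fin 2 × Fin k → Bool} (h : Good k ω) :
    ∀ (r : Fin 2) (c : Fin k), (c : ℕ) = 0 ∨ (c : ℕ) = k - 1 → ω (r, c) = false := by
  induction h with
  | base s t k hk => exact fun r c hc => bpos_boundary hk r c hc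
  | join a b k ha hb hk ω₁ ω₂ h₁ h₂ ih₁ ih₂ =>
    intro r c hc
    have hck := c.isLt
    rcases hc with hc | hc
    · rw [join_apply_left r c (by omega)]
      exact ih₁ r _ (Or.inl (by simpa using hc))
    · rw [join_apply_right hk ha hb (fun r => ih₁ r _ (Or.inr (by simp)))
        (fun r => ih₂ r _ (Or.inl (by simp))) r c (by omega)]
      exact ih₂ r _ (Or.inr (by simp only [Fin.val_mk]; omega))

lemma good_legal_range {k : ℕ} {ω : Fin 2 × Fin k → Bool} (h : Good k ω) :
    ∀ v, IsLegal (gridGraph k) ω v → 2 ≤ (v.2 : ℕ) ∧ (v.2 : ℕ) ≤ k - 3 := by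
  induction h with
  | base s t k hk =>
    intro v hv
    obtain ⟨r, c⟩ := v
    rw [isLegal_bpos hk] at hv
    exact ⟨hv.1, hv.2.1⟩
  | join a b k ha hb hk ω₁ ω₂ h₁ h₂ ih₁ ih₂ =>
    intro v hv
    obtain ⟨r, c⟩ := v
    have hck := c.isLt
    have hb1 := good_boundary h₁
    have hb2 := good_boundary h₂
    by_cases hca : (c : ℕ) ≤ a - 2
    · rw [isLegal_join_left hk ha hb hb1 r c hca] at hv
      have := ih₁ _ hv
      simp only [Fin.val_mk] at this ⊢
      omega
    · by_cases hca2 : (c : ℕ) = a - 1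
      · exfalso
        refine not_isLegal_of_false _ ?_ hv
        rw [join_apply_right hk ha hb (fun r => hb1 r _ (Or.inr (by simp)))
          (fun r => hb2 r _ (Or.inl (by simp))) r c (by omega)]
        exact hb2 r _ (Or.inl (by simp only [Fin.val_mk]; omega))
      · rw [isLegal_join_right hk ha hb hb1 hb2 r c (by omega)] at hv
        have := ih₂ _ hv
        simp only [Fin.val_mk] at this ⊢
        omega

lemma isLegal_join_cases {a b k : ℕ} {ω₁ : Fin 2 × Fin a → Bool} {ω₂ : Fin 2 × Fin b → Bool}
    (ha : 3 ≤ a) (hb : 3 ≤ b) (hk : a + b - 1 = k) (g1 : Good a ω₁) (g2 : Good b ω₂)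
    {r : Fin 2} {c : Fin k}
    (hv : IsLegal (gridGraph k) (join a b k ω₁ ω₂) (r, c)) :
    (∃ h : (c : ℕ) < a, 2 ≤ (c : ℕ) ∧ (c : ℕ) ≤ a - 3 ∧
        IsLegal (gridGraph a) ω₁ (r, ⟨c, h⟩)) ∨
    (a + 1 ≤ (c : ℕ) ∧ (c : ℕ) ≤ k - 3 ∧
        IsLegal (gridGraph b) ω₂ (r, ⟨(c : ℕ) - (a-1), by have := c.isLt; omega⟩)) := by
  have hck := c.isLt
  have hb1 := good_boundary g1
  have hb2 := good_boundary g2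
  by_cases hca : (c : ℕ) ≤ a - 2
  · rw [isLegal_join_left hk ha hb hb1 r c hca] at hv
    have hr := good_legal_range g1 _ hv
    simp only [Fin.val_mk] at hr
    exact Or.inl ⟨by omega, hr.1, hr.2, hv⟩
  · by_cases hca2 : (c : ℕ) = a - 1
    · exfalso
      refine not_isLegal_of_false _ ?_ hv
      rw [join_apply_right hk ha hb (fun r => hb1 r _ (Or.inr (by simp)))
        (fun r => hb2 r _ (Or.inl (by simp))) r c (by omega)]
      exact hb2 r _ (Or.inl (by simp only [Fin.val_mk]; omega))
    · rw [isLegal_join_right hk ha hb hb1 hb2 r c (by omega)] at hv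
      have hr := good_legal_range g2 _ hv
      simp only [Fin.val_mk] at hr
      exact Or.inr ⟨by omega, by omega, hv⟩

lemma good_move {k : ℕ} {ω : Fin 2 × Fin k → Bool} (h : Good k ω) :
    ∀ v, IsLegal (gridGraph k) ω v → Good k (move (gridGraph k) ω v) := by
  induction h with
  | base s t k hk =>
    intro v hv
    obtain ⟨r, c⟩ := v
    rw [isLegal_bpos hk] at hv
    obtain ⟨h2, h3, _⟩ := hv
    have hk5 : 5 ≤ k := by have := c.isLt; omega
    have hvc : (r, c) = (r, (⟨(c : ℕ), c.isLt⟩ : Fin k)) := by simp [Fin.eta]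
    rw [hvc, move_bpos (c : ℕ) h2 h3 hk5 r]
    exact Good.join _ _ _ (by omega) (by omega) (by omega) _ _
      (Good.base _ _ _ (by omega)) (Good.base _ _ _ (by omega))
  | join a b k ha hb hk ω₁ ω₂ h₁ h₂ ih₁ ih₂ =>
    intro v hv
    obtain ⟨r, c⟩ := v
    have hck := c.isLt
    rcases isLegal_join_cases ha hb hk h₁ h₂ hv with ⟨hlt, h2, h3, hleg⟩ | ⟨h2, h3, hleg⟩
    · rw [move_join_left hk ha hb r c h2 h3]
      exact Good.join _ _ _ ha hb hk _ _ (ih₁ _ hleg) h₂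
    · rw [move_join_right hk ha hb r c h2 h3]
      exact Good.join _ _ _ ha hb hk _ _ h₁ (ih₂ _ hleg)

lemma weight_pos_of_legal {V : Type*} [Fintype V] [DecidableEq V] {G : SimpleGraph V}
    [DecidableRel G.Adj] {ω : V → Bool} {v : V} (h : IsLegal G ω v) : 1 ≤ weight ω := by
  rw [weight]
  refine Finset.card_pos.2 ⟨v, ?_⟩
  simp [h.1]

lemma grundy_eq_zero {V : Type*} [Fintype V] [DecidableEq V] {G : SimpleGraph V}
    [DecidableRel G.Adj] {ω : V → Bool} (h : weight ω = 0) : grundy G ω = 0 := by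
  rw [grundy_eq]
  have : (Finset.univ.filter (fun v => IsLegal G ω v)) = ∅ := by
    ext v
    simp only [Finset.mem_filter, Finset.mem_univ, true_and, Finset.notMem_empty, iff_false]
    intro hv
    have := weight_pos_of_legal hv
    omega
  rw [this]
  simpa using mex_empty

end Toggle

namespace Toggle

lemma weight_eq_zero_iff {V : Type*} [Fintype V] [DecidableEq V] {ω : V → Bool} :
    weight ω = 0 ↔ ∀ v, ω v = false := by
  rw [weight, Finset.card_eq_zero, Finset.eq_empty_iff_forall_notMem]
  simp

theorem grundy_join : ∀ (n a b k : ℕ), 3 ≤ a → 3 ≤ b → a + b - 1 = k →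
    ∀ (ω₁ : Fin 2 × Fin a → Bool) (ω₂ : Fin 2 × Fin b → Bool),
    Good a ω₁ → Good b ω₂ → weight ω₁ + weight ω₂ ≤ n →
    grundy (gridGraph k) (join a b k ω₁ ω₂)
      = grundy (gridGraph a) ω₁ ^^^ grundy (gridGraph b) ω₂ := by
  intro n
  induction n with
  | zero =>
    intro a b k ha hb hk ω₁ ω₂ g1 g2 hw
    have w1 : weight ω₁ = 0 := by omega
    have w2 : weight ω₂ = 0 := by omega
    have hj : weight (join a b k ω₁ ω₂) = 0 := by
      rw [weight_eq_zero_iff] at w1 w2 ⊢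
      intro v
      obtain ⟨r, c⟩ := v
      simp only [join]
      split
      · exact w1 _
      · split
        · exact w2 _
        · rfl
    rw [grundy_eq_zero hj, grundy_eq_zero w1, grundy_eq_zero w2]
    rfl
  | succ n ih =>
    intro a b k ha hb hk ω₁ ω₂ g1 g2 hw
    have hb1 := good_boundary g1
    have hb2 := good_boundary g2
    conv_lhs => rw [grundy_eq]
    rw [grundy_eq (gridGraph a) ω₁, grundy_eq (gridGraph b) ω₂, ← mex_xor]
    congr 1
    ext x
    simp only [Finset.mem_image, Finset.mem_filter, Finset.mem_univ, true_and,
      Finset.mem_union]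
    constructor
    · rintro ⟨v, hv, rfl⟩
      obtain ⟨r, c⟩ := v
      rcases isLegal_join_cases ha hb hk g1 g2 hv with ⟨hlt, h2, h3, hleg⟩ | ⟨h2, h3, hleg⟩
      · left
        refine ⟨grundy (gridGraph a) (move (gridGraph a) ω₁ (r, ⟨c, hlt⟩)),
          ⟨(r, ⟨c, hlt⟩), hleg, rfl⟩, ?_⟩
        rw [move_join_left hk ha hb r c h2 (by omega)]
        rw [ih a b k ha hb hk _ ω₂ (good_move g1 _ hleg) g2
          (by have := weight_move_lt (gridGraph a) hleg; omega)]
        rw [grundy_eq (gridGraph b) ω₂]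
      · right
        have hck := c.isLt
        refine ⟨grundy (gridGraph b)
            (move (gridGraph b) ω₂ (r, ⟨(c:ℕ) - (a-1), by omega⟩)),
          ⟨(r, ⟨(c:ℕ) - (a-1), by omega⟩), hleg, rfl⟩, ?_⟩
        rw [move_join_right hk ha hb r c h2 h3]
        rw [ih a b k ha hb hk ω₁ _ g1 (good_move g2 _ hleg)
          (by have := weight_move_lt (gridGraph b) hleg; omega)]
        rw [grundy_eq (gridGraph a) ω₁]
    · rintro (⟨x1, ⟨v1, hv1, rfl⟩, rfl⟩ | ⟨x2, ⟨v2, hv2, rfl⟩, rfl⟩)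
      · obtain ⟨r, c1⟩ := v1
        have hr := good_legal_range g1 _ hv1
        simp only at hr
        have hc1a := c1.isLt
        have hc1k : (c1 : ℕ) < k := by omega
        refine ⟨(r, ⟨(c1:ℕ), hc1k⟩), ?_, ?_⟩
        · rw [isLegal_join_left hk ha hb hb1 _ _ (by simp only [Fin.val_mk]; omega)]
          simpa only [Fin.val_mk, Fin.eta] using hv1
        · rw [move_join_left hk ha hb _ _ (by simp only [Fin.val_mk]; omega)
            (by simp only [Fin.val_mk]; omega)]
          simp only [Fin.val_mk, Fin.eta]
          rw [ih a b k ha hb hk _ ω₂ (good_move g1 _ hv1) g2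
            (by have := weight_move_lt (gridGraph a) hv1; omega)]
          rw [grundy_eq (gridGraph b) ω₂]
      · obtain ⟨r, c2⟩ := v2
        have hr := good_legal_range g2 _ hv2
        simp only at hr
        have hc2b := c2.isLt
        have hc2k : (c2 : ℕ) + (a-1) < k := by omega
        refine ⟨(r, ⟨(c2:ℕ) + (a-1), hc2k⟩), ?_, ?_⟩
        · rw [isLegal_join_right hk ha hb hb1 hb2 _ _ (by simp only [Fin.val_mk]; omega)]
          have : ((c2:ℕ) + (a-1)) - (a-1) = (c2:ℕ) := by omega
          simp only [Fin.val_mk, this, Fin.eta]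
          exact hv2
        · rw [move_join_right hk ha hb _ _ (by simp only [Fin.val_mk]; omega)
            (by simp only [Fin.val_mk]; omega)]
          have : ((c2:ℕ) + (a-1)) - (a-1) = (c2:ℕ) := by omega
          simp only [Fin.val_mk, this, Fin.eta]
          rw [ih a b k ha hb hk ω₁ _ g1 (good_move g2 _ hv2)
            (by have := weight_move_lt (gridGraph b) hv2; omega)]
          rw [grundy_eq (gridGraph a) ω₁]

end Toggle

namespace Toggle

noncomputable def fg (k : ℕ) (e : Bool) : ℕ :=
  mex (((((Finset.Icc 3 (k-2)) ×ˢ (Finset.univ : Finset Bool))).attach).image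
    (fun p => fg p.1.1 p.1.2 ^^^ fg (k + 1 - p.1.1) (p.1.2 == e)))
termination_by k
decreasing_by
  · have := p.2
    rw [Finset.mem_product, Finset.mem_Icc] at this
    omega
  · have := p.2
    rw [Finset.mem_product, Finset.mem_Icc] at this
    omega

lemma fg_eq (k : ℕ) (e : Bool) :
    fg k e = mex (((Finset.Icc 3 (k-2)) ×ˢ (Finset.univ : Finset Bool)).image
      (fun p => fg p.1 p.2 ^^^ fg (k + 1 - p.1) (p.2 == e))) := by
  rw [fg]
  congr 1
  ext n
  simp [Finset.mem_image]

lemma fg_small {k : ℕ} (hk : k ≤ 4) (e : Bool) : fg k e = 0 := by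
  rw [fg_eq, Finset.Icc_eq_empty (by omega), Finset.empty_product, Finset.image_empty,
    mex_empty]

lemma beq_aux : ∀ s t r : Fin 2, ((s == r + 1) == (s == t)) = (r + 1 == t) := by decide

lemma grundy_move_bpos {s t : Fin 2} {k : ℕ} (hk5 : 5 ≤ k) (j : ℕ)
    (h2 : 2 ≤ j) (h3 : j ≤ k - 3) (r : Fin 2)
    (ih : ∀ m, m < k → 3 ≤ m → ∀ s t : Fin 2,
      grundy (gridGraph m) (bpos s t m) = fg m (s == t)) :
    grundy (gridGraph k) (move (gridGraph k) (bpos s t k) (r, ⟨j, by omega⟩))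
      = fg (j+1) (s == r + 1) ^^^ fg (k - j) (r + 1 == t) := by
  rw [move_bpos j h2 h3 hk5 r]
  rw [grundy_join (weight (bpos s (r+1) (j+1)) + weight (bpos (r+1) t (k-j)))
    (j+1) (k-j) k (by omega) (by omega) (by omega) _ _
    (Good.base _ _ _ (by omega)) (Good.base _ _ _ (by omega)) le_rfl]
  rw [ih (j+1) (by omega) (by omega) s (r+1), ih (k-j) (by omega) (by omega) (r+1) t]

theorem grundy_bpos : ∀ (k : ℕ), 3 ≤ k → ∀ s t : Fin 2,
    grundy (gridGraph k) (bpos s t k) = fg k (s == t) := by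
  intro k
  induction k using Nat.strong_induction_on with
  | _ k ih =>
  intro hk s t
  rw [grundy_eq, fg_eq]
  congr 1
  ext x
  simp only [Finset.mem_image, Finset.mem_filter, Finset.mem_univ, true_and,
    Finset.mem_product, Finset.mem_Icc, and_true]
  constructor
  · rintro ⟨v, hv, rfl⟩
    obtain ⟨r, c⟩ := v
    rw [isLegal_bpos hk] at hv
    obtain ⟨h2, h3, hex⟩ := hv
    have hk5 : 5 ≤ k := by have := c.isLt; omega
    have hvc : ((r, c) : Fin 2 × Fin k) = (r, ⟨(c:ℕ), c.isLt⟩) := by simp [Fin.eta]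
    rw [hvc, grundy_move_bpos hk5 (c:ℕ) h2 h3 r ih]
    refine ⟨((c:ℕ)+1, s == r + 1), ⟨by omega, by omega⟩, ?_⟩
    rw [show k + 1 - ((c:ℕ)+1) = k - (c:ℕ) by omega, beq_aux]
  · rintro ⟨⟨i, e⟩, hmem, rfl⟩
    simp only at hmem
    have hk5 : 5 ≤ k := by omega
    by_cases hexc : k = 5 ∧ s = t ∧ e = true
    · -- exceptional case: use the legal move (s, 2); all values are 0
      obtain ⟨hk5', hst, he⟩ := hexc
      have hi : i = 3 := by omega
      refine ⟨(s, ⟨2, by omega⟩), ?_, ?_⟩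
      · rw [isLegal_bpos hk]
        exact ⟨by simp, by simp; omega, by simp⟩
      · rw [grundy_move_bpos hk5 2 le_rfl (by omega) s ih]
        subst hi hk5'
        rw [fg_small (by norm_num), fg_small (by norm_num), fg_small (by norm_num),
          fg_small (by norm_num)]
    · set r : Fin 2 := if e then s + 1 else s with hr
      have hre : (s == r + 1) = e := by
        have A : ∀ u : Fin 2, (u == u + 1) = false := by decide
        have B : ∀ u : Fin 2, (u == u + 1 + 1) = true := by decide
        cases e <;> simp only [hr, if_true, if_false, Bool.false_eq_true, A, B]
      refine ⟨(r, ⟨i - 1, by omega⟩), ?_, ?_⟩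
      · rw [isLegal_bpos hk]
        refine ⟨by simp; omega, by simp; omega, ?_⟩
        rintro ⟨hk5', hst, hrs⟩
        apply hexc
        refine ⟨hk5', hst, ?_⟩
        by_contra hef
        simp only [Bool.not_eq_true] at hef
        rw [hef] at hr
        simp at hr
        exact hrs (by rw [hr])
      · have h2 : 2 ≤ i - 1 := by omega
        have h3 : i - 1 ≤ k - 3 := by omega
        rw [grundy_move_bpos hk5 (i-1) h2 h3 r ih]
        rw [show i - 1 + 1 = i by omega, show k - (i-1) = k + 1 - i by omega]
        rw [hre, ← beq_aux s t r, hre]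

end Toggle

namespace Toggle

lemma Hpos_eq {m : ℕ} (hm : 3 ≤ m) : Hpos m = bpos 0 0 m := by
  by_cases h3 : m = 3
  · subst h3
    funext p
    revert p
    decide
  · funext p
    obtain ⟨r, c⟩ := p
    have hr := r.isLt; have hc := c.isLt
    simp only [Hpos, bpos, if_neg h3, and_true]
    rw [← decide_not]
    split_ifs <;> rw [decide_eq_decide] <;>
      simp only [Fin.ext_iff, Fin.val_zero, Fin.val_one] at * <;> omega

lemma Dpos_eq {m : ℕ} (hm : 3 ≤ m) : Dpos m = bpos 0 1 m := by
  funext p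
  obtain ⟨r, c⟩ := p
  have hr := r.isLt; have hc := c.isLt
  simp only [Dpos, bpos, if_neg (show ¬(m = 3 ∧ (0:Fin 2) = 1) from
    fun h => by simpa using h.2)]
  rw [← decide_not]
  split_ifs <;> rw [decide_eq_decide] <;>
    simp only [Fin.ext_iff, Fin.val_zero, Fin.val_one] at * <;> omega

lemma GH_eq {m : ℕ} (hm : 3 ≤ m) : GH m = fg m true := by
  have h0 : ((0 : Fin 2) == 0) = true := by decide
  rw [GH, Hpos_eq hm, grundy_bpos m hm 0 0, h0]

lemma GD_eq {m : ℕ} (hm : 3 ≤ m) : GD m = fg m false := by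
  have h0 : ((0 : Fin 2) == 1) = false := by decide
  rw [GD, Dpos_eq hm, grundy_bpos m hm 0 1, h0]

theorem statement5' (m : ℕ) (hm : 4 ≤ m) :
    GH m = mex
      (((Finset.Icc 3 ((m + 1) / 2)).image
          (fun i => GH i ^^^ GH (m + 1 - i))) ∪
       ((Finset.Icc 3 ((m + 1) / 2)).image
          (fun i => GD i ^^^ GD (m + 1 - i)))) := by
  rw [GH_eq (by omega), fg_eq]
  congr 1
  ext x
  simp only [Finset.mem_image, Finset.mem_product, Finset.mem_Icc, Finset.mem_union,
    Finset.mem_univ, and_true]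
  constructor
  · rintro ⟨⟨i, e⟩, hmem, rfl⟩
    dsimp only at hmem ⊢
    have he : (e == true) = e := by cases e <;> rfl
    rw [he]
    by_cases hi : i ≤ (m + 1) / 2
    · cases e
      · exact Or.inr ⟨i, ⟨hmem.1, hi⟩, by rw [GD_eq (by omega), GD_eq (by omega)]⟩
      · exact Or.inl ⟨i, ⟨hmem.1, hi⟩, by rw [GH_eq (by omega), GH_eq (by omega)]⟩
    · have hj1 : 3 ≤ m + 1 - i := by omega
      have hj2 : m + 1 - i ≤ (m + 1) / 2 := by omega
      have hrw : m + 1 - (m + 1 - i) = i := by omega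
      cases e
      · refine Or.inr ⟨m + 1 - i, ⟨hj1, hj2⟩, ?_⟩
        rw [GD_eq (by omega), GD_eq (by omega), hrw]
        exact Nat.xor_comm _ _
      · refine Or.inl ⟨m + 1 - i, ⟨hj1, hj2⟩, ?_⟩
        rw [GH_eq (by omega), GH_eq (by omega), hrw]
        exact Nat.xor_comm _ _
  · rintro (⟨j, hj, rfl⟩ | ⟨j, hj, rfl⟩)
    · refine ⟨(j, true), ⟨hj.1, by omega⟩, ?_⟩
      dsimp only
      rw [GH_eq (by omega), GH_eq (by omega)]
      rfl
    · refine ⟨(j, false), ⟨hj.1, by omega⟩, ?_⟩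
      dsimp only
      rw [GD_eq (by omega), GD_eq (by omega)]
      rfl

end Toggle


/-- for `m ≥ 4`,
`G(H_m) = mex { G(H_i) ^^^ G(H_{m+1-i}), G(D_i) ^^^ G(D_{m+1-i}) : 3 ≤ i ≤ s }`
where `s = ⌊(m+1)/2⌋`. -/
theorem statement5 (m : ℕ) (hm : 4 ≤ m) :
    Toggle.GH m = Toggle.mex
      (((Finset.Icc 3 ((m + 1) / 2)).image
          (fun i => Toggle.GH i ^^^ Toggle.GH (m + 1 - i))) ∪
       ((Finset.Icc 3 ((m + 1) / 2)).image
          (fun i => Toggle.GD i ^^^ Toggle.GD (m + 1 - i)))) := by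
  exact Toggle.statement5' m hm
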